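/- Let (C, •, η, μ) be a left M-actegory over a monoidal category (M, j, ⊗). Define the category C_s whose objects are pairs (m, c) with m an object of M and c an object of C, and whose morphisms (m,c) → (n,d) are the morphisms m • c ⟶ n • d of C, with composition and identities inherited from C. Then: (a) the assignment m' ⊙ (m,c) := (m' ⊗ m, c), acting on a morphism pair (g : m' ⟶ n' in M, φ : m • c ⟶ n • d in C) by μ⁻¹_{m',m,c} ≫ (g • φ) ≫ μ_{n',n,d}, together with unitor given by λ_m⁻¹ • 𝟙_c : m • c ⟶ (j ⊗ m) • c and multiplicator given by α⁻¹_{m'',m',m} • 𝟙_c, is a left M-actegory structure on C_s; and (b) the functor S : C_s ⥤ C with S(m,c) := m • c and identity action on morphisms, equipped with the lineator μ_{m',m,c} : m' • S(m,c) ⟶ S(m' ⊗ m, c), is a strong M-linear functor which is an equivalence of categories (fully faithful and essentially surjective). -/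

import Mathlib

open CategoryTheory Category MonoidalCategory

universe v₁ v₂ v₃ u₁ u₂ u₃

variable (M : Type u₁) [Category.{v₁} M] [MonoidalCategory M]
variable (C : Type u₂) [Category.{v₂} C]

/-- The data of a left actegory. -/
structure LeftActegoryData where
  actObj : M → C → C
  actHom : ∀ {m n : M} {c d : C}, (m ⟶ n) → (c ⟶ d) → (actObj m c ⟶ actObj n d)
  η : ∀ c : C, c ⟶ actObj (𝟙_ M) c
  η' : ∀ c : C, actObj (𝟙_ M) c ⟶ c
  μ : ∀ (m n : M) (c : C), actObj m (actObj n c) ⟶ actObj (m ⊗ n) c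
  μ' : ∀ (m n : M) (c : C), actObj (m ⊗ n) c ⟶ actObj m (actObj n c)

variable {M C}

/-- The laws of a left actegory. -/
structure IsLeftActegory (A : LeftActegoryData M C) : Prop where
  actHom_id : ∀ (m : M) (c : C), A.actHom (𝟙 m) (𝟙 c) = 𝟙 (A.actObj m c)
  actHom_comp : ∀ {m n p : M} {c d e : C} (g : m ⟶ n) (g' : n ⟶ p) (f : c ⟶ d) (f' : d ⟶ e),
      A.actHom (g ≫ g') (f ≫ f') = A.actHom g f ≫ A.actHom g' f'
  η_iso : ∀ c, A.η c ≫ A.η' c = 𝟙 c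
  η'_iso : ∀ c, A.η' c ≫ A.η c = 𝟙 _
  μ_iso : ∀ m n c, A.μ m n c ≫ A.μ' m n c = 𝟙 _
  μ'_iso : ∀ m n c, A.μ' m n c ≫ A.μ m n c = 𝟙 _
  η_nat : ∀ {c d : C} (f : c ⟶ d), f ≫ A.η d = A.η c ≫ A.actHom (𝟙 (𝟙_ M)) f
  μ_nat : ∀ {m m' n n' : M} {c c' : C} (g : m ⟶ m') (h : n ⟶ n') (f : c ⟶ c'),
      A.actHom g (A.actHom h f) ≫ A.μ m' n' c' = A.μ m n c ≫ A.actHom (g ⊗ₘ h) f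
  pentagon : ∀ (m n p : M) (c : C),
      A.μ m n (A.actObj p c) ≫ A.μ (m ⊗ n) p c ≫ A.actHom (α_ m n p).hom (𝟙 c)
        = A.actHom (𝟙 m) (A.μ n p c) ≫ A.μ m (n ⊗ p) c
  triangle_left : ∀ (m : M) (c : C),
      A.η (A.actObj m c) ≫ A.μ (𝟙_ M) m c = A.actHom (λ_ m).inv (𝟙 c)
  triangle_right : ∀ (m : M) (c : C),
      A.actHom (𝟙 m) (A.η c) ≫ A.μ m (𝟙_ M) c = A.actHom (ρ_ m).inv (𝟙 c)


variable (M) in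
/-- The data of a lax linear functor: a functor together with a lineator. -/
structure LaxLinearData {D : Type u₃} [Category.{v₃} D]
    (A : LeftActegoryData M C) (B : LeftActegoryData M D) where
  F : C ⥤ D
  lin : ∀ (m : M) (c : C), B.actObj m (F.obj c) ⟶ F.obj (A.actObj m c)

/-- The laws of a lax linear functor. -/
structure IsLaxLinear {D : Type u₃} [Category.{v₃} D]
    {A : LeftActegoryData M C} {B : LeftActegoryData M D}
    (L : LaxLinearData M A B) : Prop where
  lin_nat : ∀ {m n : M} {c d : C} (g : m ⟶ n) (f : c ⟶ d),
      B.actHom g (L.F.map f) ≫ L.lin n d = L.lin m c ≫ L.F.map (A.actHom g f)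
  lin_unit : ∀ c : C, B.η (L.F.obj c) ≫ L.lin (𝟙_ M) c = L.F.map (A.η c)
  lin_mult : ∀ (m n : M) (c : C),
      B.μ m n (L.F.obj c) ≫ L.lin (m ⊗ n) c
        = B.actHom (𝟙 m) (L.lin n c) ≫ L.lin m (A.actObj n c) ≫ L.F.map (A.μ m n c)

variable (M C)

/-- The underlying type of the strictification of an actegory `(C, •)`:
objects are pairs `(m, c)` of a scalar and an object. -/
structure Strictification (A : LeftActegoryData M C) where
  m : M
  c : C

variable {M C}

/-- Morphisms `(m, c) → (n, d)` in the strictification are morphisms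
`m • c ⟶ n • d` of `C`. -/
instance (A : LeftActegoryData M C) : Category (Strictification M C A) where
  Hom x y := A.actObj x.m x.c ⟶ A.actObj y.m y.c
  id x := 𝟙 (A.actObj x.m x.c)
  comp f g := f ≫ g

/-- The action of `M` on the strictification: `m' ⊙ (m, c) := (m' ⊗ m, c)`,
acting on morphisms by conjugation with the multiplicator, with unitor
`λ⁻¹ • 𝟙` and multiplicator `α⁻¹ • 𝟙`. -/
def strictData (A : LeftActegoryData M C) :
    LeftActegoryData M (Strictification M C A) where
  actObj m' x := ⟨m' ⊗ x.m, x.c⟩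
  actHom {m' n'} {x y} g φ :=
    show A.actObj (m' ⊗ x.m) x.c ⟶ A.actObj (n' ⊗ y.m) y.c from
      A.μ' m' x.m x.c ≫ A.actHom g φ ≫ A.μ n' y.m y.c
  η x := A.actHom (λ_ x.m).inv (𝟙 x.c)
  η' x := A.actHom (λ_ x.m).hom (𝟙 x.c)
  μ m'' m' x := A.actHom (α_ m'' m' x.m).inv (𝟙 x.c)
  μ' m'' m' x := A.actHom (α_ m'' m' x.m).hom (𝟙 x.c)

/-- The comparison functor `S : C_s ⥤ C`, `(m, c) ↦ m • c`, identity on morphisms. -/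
def strictFunctor (A : LeftActegoryData M C) : Strictification M C A ⥤ C where
  obj x := A.actObj x.m x.c
  map φ := φ
  map_id _ := rfl
  map_comp _ _ := rfl

section Aux

variable {A : LeftActegoryData M C} (hA : IsLeftActegory A)
include hA

lemma merge {m n p : M} {c d e : C} (g : m ⟶ n) (g' : n ⟶ p) (f : c ⟶ d) (f' : d ⟶ e) :
    A.actHom g f ≫ A.actHom g' f' = A.actHom (g ≫ g') (f ≫ f') :=
  (hA.actHom_comp g g' f f').symm

lemma mu'_mu_assoc {m n : M} {c : C} {X : C} (f : A.actObj (m ⊗ n) c ⟶ X) :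
    A.μ' m n c ≫ A.μ m n c ≫ f = f := by
  rw [← assoc, hA.μ'_iso, id_comp]

lemma mu_mu'_assoc {m n : M} {c : C} {X : C} (f : A.actObj m (A.actObj n c) ⟶ X) :
    A.μ m n c ≫ A.μ' m n c ≫ f = f := by
  rw [← assoc, hA.μ_iso, id_comp]

lemma isoMu (m n : M) (c : C) : IsIso (A.μ m n c) :=
  ⟨A.μ' m n c, hA.μ_iso m n c, hA.μ'_iso m n c⟩

lemma isoWhisk {m n : M} (e : m ≅ n) (c : C) : IsIso (A.actHom e.hom (𝟙 c)) :=
  ⟨A.actHom e.inv (𝟙 c), by rw [merge hA]; simp [hA.actHom_id],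
    by rw [merge hA]; simp [hA.actHom_id]⟩

lemma isoAct {m : M} {c d : C} (f : c ⟶ d) [IsIso f] : IsIso (A.actHom (𝟙 m) f) :=
  ⟨A.actHom (𝟙 m) (inv f), by rw [merge hA]; simp [hA.actHom_id],
    by rw [merge hA]; simp [hA.actHom_id]⟩

/-- conjugation of a whiskered scalar morphism by the multiplicator. -/
lemma conj_whisk {m n : M} (g : m ⟶ n) (p : M) (c : C) :
    A.μ' m p c ≫ A.actHom g (𝟙 (A.actObj p c)) ≫ A.μ n p c
      = A.actHom (g ⊗ₘ 𝟙 p) (𝟙 c) := by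
  have h := hA.μ_nat g (𝟙 p) (𝟙 c)
  rw [hA.actHom_id] at h
  rw [h, mu'_mu_assoc hA]

lemma pentA (m n p : M) (c : C) :
    A.actHom (𝟙 m) (A.μ n p c) ≫ A.μ m (n ⊗ p) c ≫ A.actHom (α_ m n p).inv (𝟙 c)
      = A.μ m n (A.actObj p c) ≫ A.μ (m ⊗ n) p c := by
  rw [← assoc, ← hA.pentagon]
  simp only [assoc, merge hA, Iso.hom_inv_id, comp_id, hA.actHom_id]

lemma pentB (m n p : M) (c : C) :
    A.μ' m (n ⊗ p) c ≫ A.actHom (𝟙 m) (A.μ' n p c)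
      = A.actHom (α_ m n p).inv (𝟙 c) ≫ A.μ' (m ⊗ n) p c ≫ A.μ' m n (A.actObj p c) := by
  haveI := isoMu hA m (n ⊗ p) c
  haveI := isoMu hA n p c
  haveI := isoAct hA (m := m) (A.μ n p c)
  rw [← cancel_mono (A.actHom (𝟙 m) (A.μ n p c)), ← cancel_mono (A.μ m (n ⊗ p) c)]
  have lhs : (A.μ' m (n ⊗ p) c ≫ A.actHom (𝟙 m) (A.μ' n p c)) ≫
      A.actHom (𝟙 m) (A.μ n p c) ≫ A.μ m (n ⊗ p) c = 𝟙 _ := by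
    simp only [assoc]
    rw [← assoc (A.actHom (𝟙 m) (A.μ' n p c)), merge hA]
    simp only [hA.μ'_iso, comp_id, hA.actHom_id, id_comp, hA.μ'_iso]
  rw [assoc, lhs]
  rw [assoc, assoc, ← hA.pentagon]
  simp only [assoc, mu'_mu_assoc hA, merge hA, Iso.inv_hom_id, comp_id, hA.actHom_id]

end Aux

/-- **strictification.** For any left `M`-actegory `(C, •, η, μ)`:
(a) the category of pairs `(m, c)` with morphisms `m • c ⟶ n • d`, equipped with the
action `m' ⊙ (m, c) := (m' ⊗ m, c)`, is a left `M`-actegory which is strict in the sense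
that the action is by tensoring on scalars; and (b) the comparison functor
`S : (m, c) ↦ m • c`, with lineator given by the multiplicator `μ`, is a strong
`M`-linear functor and an equivalence of categories (fully faithful and
essentially surjective). -/
theorem strictification
    (A : LeftActegoryData M C) (hA : IsLeftActegory A) :
    IsLeftActegory (strictData A) ∧
    IsLaxLinear (M := M) (A := strictData A) (B := A)
      { F := strictFunctor A
        lin := fun m' x =>
          show A.actObj m' (A.actObj x.m x.c) ⟶ A.actObj (m' ⊗ x.m) x.c from
            A.μ m' x.m x.c } ∧
    (∀ (m' : M) (x : Strictification M C A), IsIso (A.μ m' x.m x.c)) ∧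
    (strictFunctor A).Full ∧ (strictFunctor A).Faithful ∧ (strictFunctor A).EssSurj := by
  refine ⟨?_, ?_, ?_, ?_, ?_, ?_⟩
  · constructor
    case actHom_id =>
      intro m x
      dsimp [strictData, instCategoryStrictification, CategoryStruct.id, CategoryStruct.comp]
      rw [hA.actHom_id, id_comp, hA.μ'_iso]
    case actHom_comp =>
      intro m n p c d e g g' f f'
      dsimp [strictData, instCategoryStrictification, CategoryStruct.id, CategoryStruct.comp]
      simp only [assoc, mu_mu'_assoc hA, hA.actHom_comp]
    case η_iso =>
      intro x
      dsimp [strictData, instCategoryStrictification, CategoryStruct.id, CategoryStruct.comp]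
      rw [merge hA, Iso.inv_hom_id, id_comp, hA.actHom_id]
    case η'_iso =>
      intro x
      dsimp [strictData, instCategoryStrictification, CategoryStruct.id, CategoryStruct.comp]
      rw [merge hA, Iso.hom_inv_id, id_comp, hA.actHom_id]
    case μ_iso =>
      intro m n x
      dsimp [strictData, instCategoryStrictification, CategoryStruct.id, CategoryStruct.comp]
      rw [merge hA, Iso.inv_hom_id, id_comp, hA.actHom_id]
    case μ'_iso =>
      intro m n x
      dsimp [strictData, instCategoryStrictification, CategoryStruct.id, CategoryStruct.comp]
      rw [merge hA, Iso.hom_inv_id, id_comp, hA.actHom_id]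
    case η_nat =>
      intro x y f
      dsimp [strictData, instCategoryStrictification, CategoryStruct.id, CategoryStruct.comp]
      rw [← hA.triangle_left y.m y.c, ← hA.triangle_left x.m x.c]
      simp only [assoc, mu_mu'_assoc hA]
      rw [← assoc, hA.η_nat f, assoc]
    case μ_nat =>
      intro m m' n n' x y g h φ
      dsimp [strictData, instCategoryStrictification, CategoryStruct.id, CategoryStruct.comp]
      have split : A.actHom (𝟙 m) (A.μ' n x.m x.c) ≫ A.actHom g (A.actHom h φ) ≫
            A.actHom (𝟙 m') (A.μ n' y.m y.c)
          = A.actHom g (A.μ' n x.m x.c ≫ A.actHom h φ ≫ A.μ n' y.m y.c) := by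
        simp only [merge hA, id_comp, comp_id]
      rw [← split]
      simp only [assoc]
      rw [pentA hA m' n' y.m y.c, reassoc_of% hA.μ_nat g h φ,
        reassoc_of% pentB hA m n x.m x.c]
      simp only [mu'_mu_assoc hA]
    case pentagon =>
      intro m n p x
      dsimp [strictData, instCategoryStrictification, CategoryStruct.id, CategoryStruct.comp]
      rw [conj_whisk hA]
      simp only [assoc]
      rw [reassoc_of% hA.μ_nat (𝟙 m) (α_ n p x.m).inv (𝟙 x.c)]
      simp only [mu'_mu_assoc hA]
      simp only [merge hA, comp_id]
      congr 1
      coherence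
    case triangle_left =>
      intro m x
      dsimp [strictData, instCategoryStrictification, CategoryStruct.id, CategoryStruct.comp]
      rw [conj_whisk hA]
      simp only [merge hA, comp_id]
      congr 1
      coherence
    case triangle_right =>
      intro m x
      dsimp [strictData, instCategoryStrictification, CategoryStruct.id, CategoryStruct.comp]
      rw [conj_whisk hA]
      simp only [assoc]
      rw [reassoc_of% hA.μ_nat (𝟙 m) (λ_ x.m).inv (𝟙 x.c)]
      simp only [mu'_mu_assoc hA]
      simp only [merge hA, comp_id]
      congr 1
      coherence
  · constructor
    case lin_nat =>
      intro m n x y g f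
      dsimp [strictFunctor, strictData, instCategoryStrictification, CategoryStruct.id, CategoryStruct.comp]
      simp only [mu_mu'_assoc hA]
    case lin_unit =>
      intro x
      exact hA.triangle_left x.m x.c
    case lin_mult =>
      intro m n x
      exact (pentA hA m n x.m x.c).symm
  · intro m' x
    exact isoMu hA m' x.m x.c
  · exact ⟨fun φ => ⟨φ, rfl⟩⟩
  · exact ⟨fun h => h⟩
  · exact ⟨fun c => ⟨⟨𝟙_ M, c⟩, ⟨⟨A.η' c, A.η c, hA.η'_iso c, hA.η_iso c⟩⟩⟩⟩
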